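/- For every integer n ≥ 6, the integer ((n-5)!/2) * (C(n,6) - C(n-1,5)) is congruent modulo (n-5)! to: -((n-5)!/2) * C(n-1,5) if n ≡ 0 (mod 8); to 0 if n is not congruent to 0 or 7 mod 8; and to ((n-5)!/2) * C(n,6) if n ≡ 7 (mod 8). -/
import Mathlib

lemma par6 (m : ℕ) : Nat.choose m 6 % 2 = (m / 2 % 2) * (m / 4 % 2) % 2 := by
  haveI := Fact.mk Nat.prime_two
  have h1 := Choose.choose_modEq_choose_mod_mul_choose_div_nat (n := m) (k := 6) (p := 2)
  have h2 := Choose.choose_modEq_choose_mod_mul_choose_div_nat (n := m / 2) (k := 3) (p := 2)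
  norm_num [Nat.div_div_eq_div_mul] at h1 h2
  have h3 : m / 4 ≡ m / 4 % 2 [MOD 2] := (Nat.mod_mod_of_dvd _ dvd_rfl).symm
  exact h1.trans (h2.trans ((Nat.ModEq.refl (m / 2 % 2)).mul h3))

lemma par5 (m : ℕ) : Nat.choose m 5 % 2 = (m % 2) * (m / 4 % 2) % 2 := by
  haveI := Fact.mk Nat.prime_two
  have h1 := Choose.choose_modEq_choose_mod_mul_choose_div_nat (n := m) (k := 5) (p := 2)
  have h2 := Choose.choose_modEq_choose_mod_mul_choose_div_nat (n := m / 2) (k := 2) (p := 2)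
  norm_num [Nat.div_div_eq_div_mul] at h1 h2
  have h3 : m / 4 ≡ m / 4 % 2 [MOD 2] := (Nat.mod_mod_of_dvd _ dvd_rfl).symm
  exact h1.trans (((Nat.ModEq.refl (m % 2)).mul (h2.trans h3)))

lemma par6' (m : ℕ) : Nat.choose m 6 % 2 = if m % 8 = 6 ∨ m % 8 = 7 then 1 else 0 := by
  have h := par6 m
  have ha : m / 2 % 2 = m % 8 / 2 % 2 := by omega
  have hb : m / 4 % 2 = m % 8 / 4 := by omega
  have h8 : m % 8 < 8 := by omega
  rw [ha, hb] at h
  interval_cases hm : m % 8 <;> simp_all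

lemma par5' (m : ℕ) : Nat.choose m 5 % 2 = if m % 8 = 5 ∨ m % 8 = 7 then 1 else 0 := by
  have h := par5 m
  have ha : m % 2 = m % 8 % 2 := by omega
  have hb : m / 4 % 2 = m % 8 / 4 := by omega
  have h8 : m % 8 < 8 := by omega
  rw [ha, hb] at h
  interval_cases hm : m % 8 <;> simp_all

lemma modd (G q : ℤ) : G * (2 * q + 1) ≡ G [ZMOD 2 * G] :=
  (Int.modEq_iff_dvd.mpr ⟨-q, by ring⟩)

lemma mneg (G : ℤ) : (G : ℤ) ≡ -G [ZMOD 2 * G] :=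
  (Int.modEq_iff_dvd.mpr ⟨-1, by ring⟩)

theorem stmt_4 (n : ℕ) (hn : 6 ≤ n) :
    (n % 8 = 0 →
      ((Nat.factorial (n - 5) : ℤ) * ((Nat.choose n 6 : ℤ) - (Nat.choose (n - 1) 5 : ℤ))) / 2 ≡
        -((Nat.factorial (n - 5) : ℤ) / 2 * (Nat.choose (n - 1) 5 : ℤ))
          [ZMOD (Nat.factorial (n - 5) : ℤ)]) ∧
    (n % 8 ≠ 0 ∧ n % 8 ≠ 7 →
      ((Nat.factorial (n - 5) : ℤ) * ((Nat.choose n 6 : ℤ) - (Nat.choose (n - 1) 5 : ℤ))) / 2 ≡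
        0 [ZMOD (Nat.factorial (n - 5) : ℤ)]) ∧
    (n % 8 = 7 →
      ((Nat.factorial (n - 5) : ℤ) * ((Nat.choose n 6 : ℤ) - (Nat.choose (n - 1) 5 : ℤ))) / 2 ≡
        (Nat.factorial (n - 5) : ℤ) / 2 * (Nat.choose n 6 : ℤ)
          [ZMOD (Nat.factorial (n - 5) : ℤ)]) := by
  rcases eq_or_lt_of_le hn with h6 | h7
  · have hf : ((Nat.factorial (n - 5) : ℤ)) = 1 := by rw [← h6]; rfl
    rw [hf]
    exact ⟨fun _ => Int.modEq_one, fun _ => Int.modEq_one, fun _ => Int.modEq_one⟩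
  -- n ≥ 7
  have h2F : 2 ∣ Nat.factorial (n - 5) :=
    Nat.dvd_factorial (by norm_num) (by omega)
  obtain ⟨G, hG⟩ := h2F
  have pascal : Nat.choose n 6 = Nat.choose (n - 1) 5 + Nat.choose (n - 1) 6 := by
    obtain ⟨m, rfl⟩ : ∃ m, n = m + 1 := ⟨n - 1, by omega⟩
    simp [Nat.choose_succ_succ]
  set c := Nat.choose (n - 1) 6 with hc
  have hGhalf : (Nat.factorial (n - 5) : ℤ) / 2 = (G : ℤ) := by
    rw [hG]; push_cast; exact Int.mul_ediv_cancel_left _ two_ne_zero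
  have hL : ((Nat.factorial (n - 5) : ℤ) * ((Nat.choose n 6 : ℤ) - (Nat.choose (n - 1) 5 : ℤ))) / 2
      = (G : ℤ) * c := by
    rw [pascal, hG]
    push_cast
    rw [show ((2 * G : ℤ)) * ((Nat.choose (n-1) 5 : ℤ) + c - Nat.choose (n-1) 5) = 2 * ((G : ℤ) * c) by ring]
    exact Int.mul_ediv_cancel_left _ two_ne_zero
  rw [hL, hGhalf, hG]
  push_cast
  refine ⟨fun h0 => ?_, fun hmid => ?_, fun h7' => ?_⟩
  · -- n % 8 = 0 : c odd, choose (n-1) 5 odd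
    have hm8 : (n - 1) % 8 = 7 := by omega
    have hc1 : c % 2 = 1 := by
      have := par6' (n - 1); rw [hm8] at this; simpa [hc] using this
    have hd1 : Nat.choose (n - 1) 5 % 2 = 1 := by
      have := par5' (n - 1); rw [hm8] at this; simpa using this
    obtain ⟨q, hq⟩ : ∃ q, c = 2 * q + 1 := ⟨c / 2, by omega⟩
    obtain ⟨r, hr⟩ : ∃ r, Nat.choose (n - 1) 5 = 2 * r + 1 := ⟨Nat.choose (n - 1) 5 / 2, by omega⟩
    rw [hq, hr]
    push_cast
    calc (G : ℤ) * (2 * q + 1) ≡ G [ZMOD 2 * G] := modd G q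
      _ ≡ -G [ZMOD 2 * G] := mneg G
      _ ≡ -((G : ℤ) * (2 * r + 1)) [ZMOD 2 * G] := (modd G r).symm.neg
  · -- middle case : c even
    have hc0 : c % 2 = 0 := by
      have := par6' (n - 1); rw [if_neg (by omega)] at this; simpa [hc] using this
    obtain ⟨q, hq⟩ : ∃ q, c = 2 * q := ⟨c / 2, by omega⟩
    rw [hq]
    push_cast
    exact (Int.modEq_iff_dvd.mpr ⟨-q, by ring⟩)
  · -- n % 8 = 7
    have hc1 : c % 2 = 1 := by
      have := par6' (n - 1); rw [if_pos (by omega : (n-1) % 8 = 6 ∨ (n-1) % 8 = 7)] at this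
      simpa [hc] using this
    have he1 : Nat.choose n 6 % 2 = 1 := by
      have := par6' n; rw [if_pos (Or.inr h7')] at this; simpa using this
    obtain ⟨q, hq⟩ : ∃ q, c = 2 * q + 1 := ⟨c / 2, by omega⟩
    obtain ⟨r, hr⟩ : ∃ r, Nat.choose n 6 = 2 * r + 1 := ⟨Nat.choose n 6 / 2, by omega⟩
    rw [hq, hr]
    push_cast
    calc (G : ℤ) * (2 * q + 1) ≡ G [ZMOD 2 * G] := modd G q
      _ ≡ (G : ℤ) * (2 * r + 1) [ZMOD 2 * G] := (modd G r).symm
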